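/- Let T, S be bounded operators on a complex Hilbert space H and n ≥ 2. The numerical radius of the n×n block matrix with T on the diagonal and S in every off-diagonal position equals max{w(T + (n−1)S), w(T − S)}. -/

import Mathlib

noncomputable def numRadius {E : Type*} [NormedAddCommGroup E] [InnerProductSpace ℂ E]
    (T : E →L[ℂ] E) : ℝ :=
  sSup {r : ℝ | ∃ x : E, ‖x‖ = 1 ∧ r = ‖(inner ℂ (T x) x : ℂ)‖}

noncomputable def blockOp {H : Type*} [NormedAddCommGroup H] [InnerProductSpace ℂ H]
    (n : ℕ) (M : Fin n → Fin n → H →L[ℂ] H) :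
    (PiLp 2 fun _ : Fin n => H) →L[ℂ] (PiLp 2 fun _ : Fin n => H) :=
  (PiLp.continuousLinearEquiv 2 ℂ (fun _ : Fin n => H)).symm.toContinuousLinearMap ∘L
    (ContinuousLinearMap.pi fun i => ∑ j, (M i j).comp (ContinuousLinearMap.proj j)) ∘L
    (PiLp.continuousLinearEquiv 2 ℂ (fun _ : Fin n => H)).toContinuousLinearMap

section Helpers
variable {E : Type*} [NormedAddCommGroup E] [InnerProductSpace ℂ E]

lemma wSet_bddAbove (T : E →L[ℂ] E) :
    BddAbove {r : ℝ | ∃ x : E, ‖x‖ = 1 ∧ r = ‖(inner ℂ (T x) x : ℂ)‖} := by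
  refine ⟨‖T‖, ?_⟩
  rintro r ⟨x, hx, rfl⟩
  calc ‖(inner ℂ (T x) x : ℂ)‖ ≤ ‖T x‖ * ‖x‖ := norm_inner_le_norm _ _
    _ ≤ ‖T‖ * ‖x‖ * ‖x‖ := mul_le_mul_of_nonneg_right (T.le_opNorm x) (norm_nonneg x)
    _ = ‖T‖ := by rw [hx]; ring

lemma mem_wSet (T : E →L[ℂ] E) (x : E) (hx : x ≠ 0) :
    ‖(inner ℂ (T x) x : ℂ)‖ / ‖x‖ ^ 2 ∈
      {r : ℝ | ∃ x : E, ‖x‖ = 1 ∧ r = ‖(inner ℂ (T x) x : ℂ)‖} := by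
  have hnx : ‖x‖ ≠ 0 := norm_ne_zero_iff.mpr hx
  refine ⟨((‖x‖ : ℂ))⁻¹ • x, ?_, ?_⟩
  · rw [norm_smul]
    simp [hnx]
  · rw [map_smul, inner_smul_left, inner_smul_right]
    rw [map_inv₀, Complex.conj_ofReal]
    rw [norm_mul, norm_mul]
    have : ‖((‖x‖ : ℂ))⁻¹‖ = ‖x‖⁻¹ := by
      rw [norm_inv, Complex.norm_real, Real.norm_eq_abs, abs_of_nonneg (norm_nonneg x)]
    rw [this, div_eq_mul_inv, sq, mul_inv]
    ring

lemma inner_le_numRadius (T : E →L[ℂ] E) (x : E) (hx : ‖x‖ = 1) :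
    ‖(inner ℂ (T x) x : ℂ)‖ ≤ numRadius T :=
  le_csSup (wSet_bddAbove T) ⟨x, hx, rfl⟩

lemma div_le_numRadius (T : E →L[ℂ] E) (x : E) (hx : x ≠ 0) :
    ‖(inner ℂ (T x) x : ℂ)‖ / ‖x‖ ^ 2 ≤ numRadius T :=
  le_csSup (wSet_bddAbove T) (mem_wSet T x hx)

lemma inner_le_sq (T : E →L[ℂ] E) (x : E) :
    ‖(inner ℂ (T x) x : ℂ)‖ ≤ ‖x‖ ^ 2 * numRadius T := by
  rcases eq_or_ne x 0 with rfl | hx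
  · simp
  · have h := div_le_numRadius T x hx
    have hx2 : (0:ℝ) < ‖x‖ ^ 2 := by
      have : ‖x‖ ≠ 0 := norm_ne_zero_iff.mpr hx
      positivity
    rw [div_le_iff₀ hx2] at h
    linarith [h]

lemma numRadius_eq_zero_of_subsingleton [Subsingleton E] (T : E →L[ℂ] E) :
    numRadius T = 0 := by
  have : {r : ℝ | ∃ x : E, ‖x‖ = 1 ∧ r = ‖(inner ℂ (T x) x : ℂ)‖} = ∅ := by
    ext r
    simp only [Set.mem_setOf_eq, Set.mem_empty_iff_false, iff_false, not_exists]
    rintro x ⟨hx, -⟩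
    rw [Subsingleton.elim x 0] at hx
    simp at hx
  rw [numRadius, this, Real.sSup_empty]

lemma const_sum (n : ℕ) (c : ℂ) : (∑ _i : Fin n, c) = (n : ℂ) * c := by
  rw [Finset.sum_const, Finset.card_univ, Fintype.card_fin, nsmul_eq_mul]

lemma expand1 {n : ℕ} (v : Fin n → E) (y : E) (hv : ∑ i, v i = 0) (C D : E →L[ℂ] E) :
    ∑ i, (inner ℂ (C (v i + y) + D y) (v i + y) : ℂ)
      = (∑ i, (inner ℂ (C (v i)) (v i) : ℂ)) + (n:ℂ) * inner ℂ (C y) y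
        + (n:ℂ) * inner ℂ (D y) y := by
  have e1 : (∑ i, (inner ℂ (C (v i)) y : ℂ)) = 0 := by
    rw [← sum_inner, ← map_sum, hv, map_zero, inner_zero_left]
  have e2 : (∑ i, (inner ℂ (C y) (v i) : ℂ)) = 0 := by
    rw [← inner_sum, hv, inner_zero_right]
  have e3 : (∑ i, (inner ℂ (D y) (v i) : ℂ)) = 0 := by
    rw [← inner_sum, hv, inner_zero_right]
  have step : ∀ i : Fin n, (inner ℂ (C (v i + y) + D y) (v i + y) : ℂ)
      = inner ℂ (C (v i)) (v i) + (inner ℂ (C (v i)) y + (inner ℂ (C y) (v i)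
        + (inner ℂ (C y) y + (inner ℂ (D y) (v i) + inner ℂ (D y) y)))) := by
    intro i
    simp only [map_add, inner_add_left, inner_add_right]
    ring
  rw [Finset.sum_congr rfl fun i _ => step i]
  simp only [Finset.sum_add_distrib]
  rw [e1, e2, e3, const_sum, const_sum]
  ring

lemma expand2 {n : ℕ} (v : Fin n → E) (y : E) (hv : ∑ i, v i = 0) :
    ∑ i, (inner ℂ (v i + y) (v i + y) : ℂ)
      = (∑ i, (inner ℂ (v i) (v i) : ℂ)) + (n:ℂ) * inner ℂ y y := by
  have h := expand1 v y hv (ContinuousLinearMap.id ℂ E) 0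
  simpa using h

end Helpers

variable {H : Type*} [NormedAddCommGroup H] [InnerProductSpace ℂ H]

theorem stmt12 (T S : H →L[ℂ] H) (n : ℕ) (hn : 2 ≤ n) :
    numRadius (blockOp n (fun i j => if i = j then T else S)) =
      max (numRadius (T + (n - 1 : ℕ) • S)) (numRadius (T - S)) := by
  classical
  set A : H →L[ℂ] H := T + (n - 1 : ℕ) • S with hA
  set B : H →L[ℂ] H := T - S with hB
  set M : (PiLp 2 fun _ : Fin n => H) →L[ℂ] (PiLp 2 fun _ : Fin n => H) :=
    blockOp n (fun i j => if i = j then T else S) with hMdef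
  have hnC : (n : ℂ) ≠ 0 := Nat.cast_ne_zero.mpr (by omega)
  have hAy : ∀ y : H, (inner ℂ (A y) y : ℂ)
      = inner ℂ (T y) y + ((n:ℂ) - 1) * inner ℂ (S y) y := by
    intro y
    have h1 : ((n - 1 : ℕ) : ℂ) = (n : ℂ) - 1 := by
      push_cast [Nat.cast_sub (by omega : 1 ≤ n)]; ring
    rw [hA, ContinuousLinearMap.add_apply, inner_add_left]
    have h2 : ((n - 1 : ℕ) • S) y = (((n - 1 : ℕ) : ℂ)) • S y := by
      rw [ContinuousLinearMap.smul_apply, Nat.cast_smul_eq_nsmul]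
    rw [h2, inner_smul_left, Complex.conj_natCast, h1]
  have hBy : ∀ y : H, (inner ℂ (B y) y : ℂ) = inner ℂ (T y) y - inner ℂ (S y) y := by
    intro y
    simp [hB, inner_sub_left]
  -- block operator application
  have hMapp : ∀ (x : PiLp 2 fun _ : Fin n => H) (i : Fin n),
      M x i = B (x i) + S (∑ j, x j) := by
    intro x i
    have h0 : M x i = ∑ j, (if i = j then T else S) (x j) := by
      simp [hMdef, blockOp]
    rw [h0]
    calc ∑ j, (if i = j then T else S) (x j)
        = ∑ j, (S (x j) + if i = j then T (x j) - S (x j) else 0) := by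
          refine Finset.sum_congr rfl fun j _ => ?_
          split_ifs <;> simp
      _ = B (x i) + S (∑ j, x j) := by
          rw [Finset.sum_add_distrib, Finset.sum_ite_eq, map_sum]
          simp [hB]
          abel
  by_cases hH : Subsingleton H
  · have : Subsingleton (PiLp 2 fun _ : Fin n => H) :=
      (PiLp.continuousLinearEquiv 2 ℂ (fun _ : Fin n => H)).toEquiv.subsingleton
    rw [numRadius_eq_zero_of_subsingleton, numRadius_eq_zero_of_subsingleton,
      numRadius_eq_zero_of_subsingleton]
    simp
  · have : Nontrivial H := not_subsingleton_iff_nontrivial.mp hH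
    obtain ⟨z, hz⟩ := exists_norm_eq H zero_le_one
    have hA0 : 0 ≤ numRadius A :=
      le_trans (norm_nonneg _) (inner_le_numRadius A z hz)
    have hB0 : 0 ≤ numRadius B :=
      le_trans (norm_nonneg _) (inner_le_numRadius B z hz)
    refine le_antisymm ?_ (max_le ?_ ?_)
    · -- upper bound
      apply Real.sSup_le
      · rintro r ⟨x, hx, rfl⟩
        set y : H := (n:ℂ)⁻¹ • (∑ j, x j) with hy
        set v : Fin n → H := fun i => x i - y with hvdef
        have hsy : (∑ j, x j) = (n:ℂ) • y := by
          rw [hy, smul_smul, mul_inv_cancel₀ hnC, one_smul]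
        have hv : ∑ i, v i = 0 := by
          simp only [hvdef, Finset.sum_sub_distrib]
          rw [Finset.sum_const, Finset.card_univ, Fintype.card_fin,
            ← Nat.cast_smul_eq_nsmul ℂ, ← hsy, sub_self]
        have hxe : ∀ i, x i = v i + y := fun i => by simp [hvdef]
        -- inner ℂ product identity
        have hinner : (inner ℂ (M x) x : ℂ)
            = (∑ i, (inner ℂ (B (v i)) (v i) : ℂ)) + (n:ℂ) * inner ℂ (A y) y := by
          rw [PiLp.inner_apply]
          have e : ∀ i : Fin n, (inner ℂ (M x i) (x i) : ℂ)
              = inner ℂ (B (v i + y) + ((n:ℂ) • S) y) (v i + y) := by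
            intro i
            rw [hMapp, hxe i, hsy, map_smul, ContinuousLinearMap.smul_apply]
          rw [Finset.sum_congr rfl fun i _ => e i, expand1 v y hv B ((n:ℂ) • S)]
          rw [ContinuousLinearMap.smul_apply, inner_smul_left, Complex.conj_natCast,
            hAy, hBy]
          ring
        -- norm identity
        have hnorm : (∑ i, ‖v i‖ ^ 2) + (n:ℝ) * ‖y‖ ^ 2 = 1 := by
          have key : ∑ i, ((inner ℂ (x i) (x i) : ℂ))
              = (∑ i, (inner ℂ (v i) (v i) : ℂ)) + (n:ℂ) * inner ℂ y y := by
            rw [Finset.sum_congr rfl fun i _ => by rw [hxe i], expand2 v y hv]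
          have hxsum : ∑ i, ‖x i‖ ^ 2 = 1 := by
            have := PiLp.norm_sq_eq_of_L2 (fun _ : Fin n => H) x
            rw [hx] at this
            simpa using this.symm
          have keyR : (∑ i, ‖x i‖ ^ 2) = (∑ i, ‖v i‖ ^ 2) + (n:ℝ) * ‖y‖ ^ 2 := by
            have c : (∑ i, (‖x i‖:ℂ) ^ 2)
                = (∑ i, (‖v i‖:ℂ) ^ 2) + (n:ℂ) * (‖y‖:ℂ) ^ 2 := by
              calc (∑ i, (‖x i‖:ℂ) ^ 2)
                  = ∑ i, ((inner ℂ (x i) (x i) : ℂ)) := by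
                    refine Finset.sum_congr rfl fun i _ => ?_
                    rw [inner_self_eq_norm_sq_to_K]; norm_cast
                _ = (∑ i, (inner ℂ (v i) (v i) : ℂ)) + (n:ℂ) * inner ℂ y y := key
                _ = (∑ i, (‖v i‖:ℂ) ^ 2) + (n:ℂ) * (‖y‖:ℂ) ^ 2 := by
                    rw [inner_self_eq_norm_sq_to_K]
                    refine congrArg₂ (· + ·) ?_ ?_
                    · refine Finset.sum_congr rfl fun i _ => ?_
                      rw [inner_self_eq_norm_sq_to_K]; norm_cast
                    · rfl
            exact_mod_cast c
          linarith [hxsum, keyR]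
        -- final estimate
        set K : ℝ := max (numRadius A) (numRadius B) with hK
        have h1 : ‖(inner ℂ (M x) x : ℂ)‖
            ≤ (∑ i, ‖(inner ℂ (B (v i)) (v i) : ℂ)‖) + (n:ℝ) * ‖(inner ℂ (A y) y : ℂ)‖ := by
          rw [hinner]
          refine le_trans (norm_add_le _ _) (add_le_add ?_ ?_)
          · exact norm_sum_le _ _
          · rw [norm_mul]
            simp
        have h2 : (∑ i, ‖(inner ℂ (B (v i)) (v i) : ℂ)‖) ≤ (∑ i, ‖v i‖ ^ 2) * K := by
          rw [Finset.sum_mul]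
          refine Finset.sum_le_sum fun i _ => ?_
          refine le_trans (inner_le_sq B (v i)) ?_
          exact mul_le_mul_of_nonneg_left (le_max_right _ _) (by positivity)
        have h3 : (n:ℝ) * ‖(inner ℂ (A y) y : ℂ)‖ ≤ ((n:ℝ) * ‖y‖ ^ 2) * K := by
          have hKA : numRadius A ≤ K := le_max_left _ _
          have hy2 : (0:ℝ) ≤ ‖y‖ ^ 2 := by positivity
          have hn0 : (0:ℝ) ≤ (n:ℝ) := by positivity
          calc (n:ℝ) * ‖(inner ℂ (A y) y : ℂ)‖
              ≤ (n:ℝ) * (‖y‖ ^ 2 * numRadius A) :=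
                mul_le_mul_of_nonneg_left (inner_le_sq A y) hn0
            _ ≤ (n:ℝ) * (‖y‖ ^ 2 * K) :=
                mul_le_mul_of_nonneg_left (mul_le_mul_of_nonneg_left hKA hy2) hn0
            _ = ((n:ℝ) * ‖y‖ ^ 2) * K := by ring
        calc ‖(inner ℂ (M x) x : ℂ)‖
            ≤ (∑ i, ‖v i‖ ^ 2) * K + ((n:ℝ) * ‖y‖ ^ 2) * K :=
              le_trans h1 (add_le_add h2 h3)
          _ = ((∑ i, ‖v i‖ ^ 2) + (n:ℝ) * ‖y‖ ^ 2) * K := by ring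
          _ = K := by rw [hnorm, one_mul]
      · exact le_max_of_le_left hA0
    · -- w(A) ≤ w(M)
      have hz0 : z ≠ 0 := by
        intro h; rw [h] at hz; simp at hz
      have hXz0 : (WithLp.toLp 2 (fun _ => z) : PiLp 2 fun _ : Fin n => H) ≠ 0 :=
        fun h => hz0 (by
          have := congrArg (fun X : PiLp 2 (fun _ : Fin n => H) => X (⟨0, by omega⟩ : Fin n)) h
          simpa using this)
      have hM0 : 0 ≤ numRadius M :=
        le_trans (by positivity) (div_le_numRadius M (WithLp.toLp 2 (fun _ => z)) hXz0)
      apply Real.sSup_le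
      · rintro r ⟨z', hz', rfl⟩
        have hz'0 : z' ≠ 0 := by
          intro h; rw [h] at hz'; simp at hz'
        set X : PiLp 2 fun _ : Fin n => H := WithLp.toLp 2 (fun _ => z') with hX
        have hX0 : X ≠ 0 := fun h => hz'0 (by
          have := congrArg (fun X : PiLp 2 (fun _ : Fin n => H) => X (⟨0, by omega⟩ : Fin n)) h
          simpa [hX] using this)
        have hXs : (∑ j, X j) = (n:ℂ) • z' := by
          simp only [hX, PiLp.toLp_apply]
          rw [Finset.sum_const, Finset.card_univ, Fintype.card_fin,
            ← Nat.cast_smul_eq_nsmul ℂ]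
        have hIX : (inner ℂ (M X) X : ℂ) = (n:ℂ) * inner ℂ (A z') z' := by
          rw [PiLp.inner_apply]
          have e : ∀ i : Fin n, (inner ℂ (M X i) (X i) : ℂ) = inner ℂ (A z') z' := by
            intro i
            rw [hMapp, hXs, map_smul]
            simp only [hX, PiLp.toLp_apply]
            rw [inner_add_left, inner_smul_left, Complex.conj_natCast, hAy, hBy]
            ring
          rw [Finset.sum_congr rfl fun i _ => e i, const_sum]
        have hNX : ‖X‖ ^ 2 = (n:ℝ) := by
          rw [PiLp.norm_sq_eq_of_L2]
          simp only [hX, PiLp.toLp_apply]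
          rw [hz']
          simp
        have h := div_le_numRadius M X hX0
        rw [hIX, hNX, norm_mul] at h
        have hn' : ‖((n:ℂ))‖ = (n:ℝ) := by simp
        have hnR : (n:ℝ) ≠ 0 := Nat.cast_ne_zero.mpr (by omega)
        rw [hn', mul_comm, mul_div_assoc, div_self hnR, mul_one] at h
        exact h
      · exact hM0
    · -- w(B) ≤ w(M)
      have hz0 : z ≠ 0 := by
        intro h; rw [h] at hz; simp at hz
      have hXz0 : (WithLp.toLp 2 (fun _ => z) : PiLp 2 fun _ : Fin n => H) ≠ 0 :=
        fun h => hz0 (by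
          have := congrArg (fun X : PiLp 2 (fun _ : Fin n => H) => X (⟨0, by omega⟩ : Fin n)) h
          simpa using this)
      have hM0 : 0 ≤ numRadius M :=
        le_trans (by positivity) (div_le_numRadius M (WithLp.toLp 2 (fun _ => z)) hXz0)
      apply Real.sSup_le
      · rintro r ⟨z', hz', rfl⟩
        have hz'0 : z' ≠ 0 := by
          intro h; rw [h] at hz'; simp at hz'
        set i0 : Fin n := ⟨0, by omega⟩ with hi0
        set i1 : Fin n := ⟨1, by omega⟩ with hi1
        have hne : i0 ≠ i1 := by
          simp [hi0, hi1, Fin.ext_iff]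
        set X : PiLp 2 fun _ : Fin n => H :=
          WithLp.toLp 2 (fun i => if i = i0 then z' else if i = i1 then -z' else 0) with hX
        have hXapp : ∀ i, X i = if i = i0 then z' else if i = i1 then -z' else 0 :=
          fun i => rfl
        have hXi0 : X i0 = z' := by rw [hXapp]; simp
        have hX0 : X ≠ 0 := by
          intro h
          exact hz'0 (by rw [← hXi0]; exact congrArg (fun X : PiLp 2 (fun _ : Fin n => H) => X i0) h)
        have hdec : ∀ i, X i = (if i = i0 then z' else 0) + (if i = i1 then -z' else 0) := by
          intro i
          by_cases h0 : i = i0 <;> by_cases h1 : i = i1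
          · exact absurd (h0 ▸ h1) hne
          · rw [hXapp]; simp [h0, h1, hne, hne.symm]
          · rw [hXapp]; simp [h0, h1, hne, hne.symm]
          · rw [hXapp]; simp [h0, h1, hne, hne.symm]
        have hXs : (∑ j, X j) = 0 := by
          rw [Finset.sum_congr rfl fun i _ => hdec i, Finset.sum_add_distrib,
            Fintype.sum_ite_eq' i0 (fun _ => z'),
            Fintype.sum_ite_eq' i1 (fun _ => -z')]
          simp
        have hIX : (inner ℂ (M X) X : ℂ) = 2 * inner ℂ (B z') z' := by
          rw [PiLp.inner_apply]
          have e : ∀ i : Fin n, (inner ℂ (M X i) (X i) : ℂ)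
              = (if i = i0 then (inner ℂ (B z') z' : ℂ) else 0)
                + (if i = i1 then (inner ℂ (B z') z' : ℂ) else 0) := by
            intro i
            rw [hMapp, hXs, map_zero, add_zero]
            by_cases h0 : i = i0 <;> by_cases h1 : i = i1
            · exact absurd (h0 ▸ h1) hne
            · rw [hXapp]; simp [h0, h1, hne, hne.symm]
            · rw [hXapp]; simp [h0, h1, hne, hne.symm, inner_neg_neg]
            · rw [hXapp]; simp [h0, h1, hne, hne.symm]
          rw [Finset.sum_congr rfl fun i _ => e i, Finset.sum_add_distrib,
            Fintype.sum_ite_eq' i0 (fun _ => (inner ℂ (B z') z' : ℂ)),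
            Fintype.sum_ite_eq' i1 (fun _ => (inner ℂ (B z') z' : ℂ))]
          ring
        have hNX : ‖X‖ ^ 2 = 2 := by
          rw [PiLp.norm_sq_eq_of_L2]
          have e : ∀ i : Fin n, ‖X i‖ ^ 2
              = (if i = i0 then (1:ℝ) else 0) + (if i = i1 then (1:ℝ) else 0) := by
            intro i
            by_cases h0 : i = i0 <;> by_cases h1 : i = i1
            · exact absurd (h0 ▸ h1) hne
            · rw [hXapp]; simp [h0, h1, hne, hne.symm, hz']
            · rw [hXapp]; simp [h0, h1, hne, hne.symm, hz']
            · rw [hXapp]; simp [h0, h1, hne, hne.symm]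
          rw [Finset.sum_congr rfl fun i _ => e i, Finset.sum_add_distrib,
            Fintype.sum_ite_eq' i0 (fun _ => (1:ℝ)),
            Fintype.sum_ite_eq' i1 (fun _ => (1:ℝ))]
          norm_num
        have h := div_le_numRadius M X hX0
        rw [hIX, hNX, norm_mul] at h
        have h2 : ‖((2:ℂ))‖ = (2:ℝ) := by simp
        rw [h2, mul_comm, mul_div_assoc, div_self (by norm_num : (2:ℝ) ≠ 0), mul_one] at h
        exact h
      · exact hM0
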